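/- Let (X,x₀) be a pointed topological space, n ≥ 1 and m ∈ ℕ. Let f_1,…,f_m and f′_1,…,f′_m be continuous pointed maps with f_k, f′_k : (S_k^n, θ) → (X, x₀) and f_k homotopic to f′_k relative to {θ} for k = 1,…,m, and let g, g′ : (⋁̃_{k≥m+1} S_k^n, θ) → (X, x₀) be continuous maps that are homotopic relative to {θ}, where ⋁̃_{k≥m+1} S_k^n is the subspace of ℍ^n consisting of the spheres S_k^n with k ≥ m+1. Then the maps f, f′ : (ℍ^n, θ) → (X, x₀) defined by f|_{S_k^n} = f_k, f′|_{S_k^n} = f′_k for k ≤ m and f|_{⋁̃_{k≥m+1}S_k^n} = g, f′|_{⋁̃_{k≥m+1}S_k^n} = g′ are continuous and homotopic relative to {θ}. -/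

import Mathlib

open scoped unitInterval Topology Topology.Homotopy

noncomputable section

namespace HG

/-- The `k`-th `n`-sphere `Sₖⁿ` (of radius `1/(k+1)`) of the `n`-dimensional Hawaiian
earring, as a subset of `ℝ^{n+1}`. -/
def sphereSet (n k : ℕ) : Set (EuclideanSpace ℝ (Fin (n+1))) :=
  {r | (r 0 - 1/(k+1))^2 + ∑ i ∈ Finset.univ.erase (0 : Fin (n+1)), (r i)^2 = (1/(k+1))^2}

/-- The `n`-dimensional Hawaiian earring
`ℍⁿ = {r ∈ ℝ^{n+1} | (r₀ - 1/k)² + ∑_{i=1}^n rᵢ² = (1/k)², some k ∈ ℕ}`. -/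
def hawaiianSet (n : ℕ) : Set (EuclideanSpace ℝ (Fin (n+1))) :=
  ⋃ k : ℕ, sphereSet n k

/-- The base point `θ = (0, …, 0)` of the Hawaiian earring. -/
def theta (n : ℕ) : EuclideanSpace ℝ (Fin (n+1)) := 0

theorem theta_mem_sphereSet (n k : ℕ) : theta n ∈ sphereSet n k := by
  simp [sphereSet, theta]

theorem sphereSet_subset (n k : ℕ) : sphereSet n k ⊆ hawaiianSet n :=
  Set.subset_iUnion (sphereSet n) k

/-- `θ` as a point of the subspace `ℍⁿ`. -/
def thetaPt (n : ℕ) : ↥(hawaiianSet n) :=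
  ⟨theta n, sphereSet_subset n 0 (theta_mem_sphereSet n 0)⟩

/-- The "tail" `⋁̃_{k ≥ m} Sₖⁿ` of the Hawaiian earring: the union of all the spheres
`Sₖⁿ` with index `k ≥ m`, as a subspace of `ℍⁿ`. -/
def tailSet (n m : ℕ) : Set (EuclideanSpace ℝ (Fin (n+1))) :=
  ⋃ k : ℕ, ⋃ (_ : m ≤ k), sphereSet n k

theorem tailSet_subset (n m : ℕ) : tailSet n m ⊆ hawaiianSet n := by
  intro r hr
  rcases Set.mem_iUnion.mp hr with ⟨k, hk⟩
  rcases Set.mem_iUnion.mp hk with ⟨-, h⟩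
  exact sphereSet_subset n k h

theorem theta_mem_tailSet (n m : ℕ) : theta n ∈ tailSet n m :=
  Set.mem_iUnion.mpr ⟨m, Set.mem_iUnion.mpr ⟨le_rfl, theta_mem_sphereSet n m⟩⟩

def Q (n : ℕ) (r : EuclideanSpace ℝ (Fin (n+1))) : ℝ :=
  (r 0)^2 + ∑ i ∈ Finset.univ.erase (0 : Fin (n+1)), (r i)^2

lemma apply_cont (n : ℕ) (i : Fin (n+1)) :
    Continuous fun r : EuclideanSpace ℝ (Fin (n+1)) => r i :=
  (EuclideanSpace.proj (𝕜 := ℝ) i).continuous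

lemma Q_cont (n : ℕ) : Continuous (Q n) :=
  ((apply_cont n 0).pow 2).add
    (continuous_finset_sum _ fun i _ => (apply_cont n i).pow 2)

lemma Q_nonneg (n : ℕ) (r : EuclideanSpace ℝ (Fin (n+1))) : 0 ≤ Q n r := by
  unfold Q; positivity

lemma mem_sphere_iff {n k : ℕ} {r : EuclideanSpace ℝ (Fin (n+1))} :
    r ∈ sphereSet n k ↔ Q n r = 2*(1/(k+1))*(r 0) := by
  simp only [sphereSet, Set.mem_setOf_eq, Q]
  constructor <;> intro h <;> nlinarith [h]

lemma isClosed_sphereSet (n k : ℕ) : IsClosed (sphereSet n k) := by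
  have : sphereSet n k = (fun r : EuclideanSpace ℝ (Fin (n+1)) =>
      (r 0 - 1/(k+1))^2 + ∑ i ∈ Finset.univ.erase (0 : Fin (n+1)), (r i)^2) ⁻¹'
      {((1:ℝ)/(k+1))^2} := rfl
  rw [this]
  exact IsClosed.preimage
    ((((apply_cont n 0).sub continuous_const).pow 2).add
      (continuous_finset_sum _ fun i _ => (apply_cont n i).pow 2)) isClosed_singleton

lemma r0_nonneg {n k : ℕ} {r : EuclideanSpace ℝ (Fin (n+1))} (h : r ∈ sphereSet n k) :
    0 ≤ r 0 := by
  have hq := mem_sphere_iff.mp h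
  have h0 : (0:ℝ) < 1/(k+1) := by positivity
  nlinarith [Q_nonneg n r]

lemma eq_theta_of {n k : ℕ} {r : EuclideanSpace ℝ (Fin (n+1))} (h : r ∈ sphereSet n k)
    (h0 : r 0 = 0) : r = theta n := by
  have hq := mem_sphere_iff.mp h
  rw [h0] at hq
  have hQ : Q n r = 0 := by rw [hq]; ring
  unfold Q at hQ
  rw [h0] at hQ
  have hs : ∑ i ∈ Finset.univ.erase (0 : Fin (n+1)), (r i)^2 = 0 := by nlinarith
  ext i
  show r i = 0
  by_cases hi : i = 0
  · rw [hi]; exact h0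
  · have := (Finset.sum_eq_zero_iff_of_nonneg (fun j _ => sq_nonneg (r j))).mp hs i
      (Finset.mem_erase.mpr ⟨hi, Finset.mem_univ i⟩)
    exact pow_eq_zero_iff (two_ne_zero) |>.mp this

lemma sphere_inter {n k j : ℕ} {r : EuclideanSpace ℝ (Fin (n+1))} (hkj : k ≠ j)
    (hk : r ∈ sphereSet n k) (hj : r ∈ sphereSet n j) : r = theta n := by
  have q1 := mem_sphere_iff.mp hk
  have q2 := mem_sphere_iff.mp hj
  have h0 : r 0 = 0 := by
    by_contra h0
    have he : 2*((1:ℝ)/(k+1)) = 2*(1/(j+1)) :=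
      mul_right_cancel₀ h0 (q1.symm.trans q2)
    have hk0 : ((k:ℝ)+1) ≠ 0 := by positivity
    have hj0 : ((j:ℝ)+1) ≠ 0 := by positivity
    field_simp at he
    exact hkj (by exact_mod_cast add_right_cancel he.symm)
  exact eq_theta_of hk h0
lemma mem_tail_iff {n m k : ℕ} {r : EuclideanSpace ℝ (Fin (n+1))} (hk : r ∈ sphereSet n k) :
    r ∈ tailSet n m ↔ ((m:ℝ)+1) * Q n r ≤ 2 * r 0 := by
  constructor
  · intro h
    obtain ⟨j, hj, hjr⟩ : ∃ j, m ≤ j ∧ r ∈ sphereSet n j := by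
      simpa [tailSet, Set.mem_iUnion] using h
    have qj := mem_sphere_iff.mp hjr
    have hr0 := r0_nonneg hjr
    have hj0 : (0:ℝ) < (j:ℝ)+1 := by positivity
    have hle : ((m:ℝ)+1) ≤ (j:ℝ)+1 := by
      have : (m:ℝ) ≤ j := by exact_mod_cast hj
      linarith
    have h1 : ((m:ℝ)+1) * (1/((j:ℝ)+1)) ≤ 1 := by
      rw [mul_one_div, div_le_one hj0]; exact hle
    rw [qj]; nlinarith
  · intro h
    by_cases h0 : r 0 = 0
    · rw [eq_theta_of hk h0]; exact theta_mem_tailSet n m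
    · have hr0 : 0 < r 0 := lt_of_le_of_ne (r0_nonneg hk) (Ne.symm h0)
      have qk := mem_sphere_iff.mp hk
      rw [qk] at h
      have hk0 : (0:ℝ) < (k:ℝ)+1 := by positivity
      have h1 : ((m:ℝ)+1) * (1/((k:ℝ)+1)) ≤ 1 := by nlinarith
      rw [mul_one_div, div_le_one hk0] at h1
      have hmk : m ≤ k := by exact_mod_cast (by linarith : (m:ℝ) ≤ (k:ℝ))
      exact Set.mem_iUnion.mpr ⟨k, Set.mem_iUnion.mpr ⟨hmk, hk⟩⟩

lemma tail_sub_eq (n m : ℕ) :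
    {x : ↥(hawaiianSet n) | (x : EuclideanSpace ℝ (Fin (n+1))) ∈ tailSet n m}
      = {x : ↥(hawaiianSet n) | ((m:ℝ)+1) * Q n x.1 ≤ 2 * x.1 0} := by
  ext x
  obtain ⟨k, hk⟩ := Set.mem_iUnion.mp x.2
  exact mem_tail_iff hk

lemma isClosed_tail_sub (n m : ℕ) :
    IsClosed {x : ↥(hawaiianSet n) | (x : EuclideanSpace ℝ (Fin (n+1))) ∈ tailSet n m} := by
  rw [tail_sub_eq]
  exact isClosed_le
    (continuous_const.mul ((Q_cont n).comp continuous_subtype_val))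
    (continuous_const.mul ((apply_cont n 0).comp continuous_subtype_val))

lemma glueAux {n m : ℕ} {W Z : Type*} [TopologicalSpace W] [TopologicalSpace Z]
    (π : W → ↥(hawaiianSet n)) (hπ : Continuous π) (F : W → Z)
    (hk : ∀ k : ℕ, k < m →
      ContinuousOn F (π ⁻¹' (Subtype.val ⁻¹' sphereSet n k)))
    (ht : ContinuousOn F
      (π ⁻¹' {x : ↥(hawaiianSet n) | (x : EuclideanSpace ℝ (Fin (n+1))) ∈ tailSet n m})) :
    Continuous F := by
  set T : Option (Fin m) → Set W := fun i =>
    Option.rec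
      (π ⁻¹' {x : ↥(hawaiianSet n) | (x : EuclideanSpace ℝ (Fin (n+1))) ∈ tailSet n m})
      (fun k => π ⁻¹' (Subtype.val ⁻¹' sphereSet n (k : ℕ))) i with hT
  apply (locallyFinite_of_finite T).continuous
  · ext w
    simp only [Set.mem_iUnion, Set.mem_univ, iff_true]
    obtain ⟨k, hks⟩ := Set.mem_iUnion.mp (π w).2
    by_cases hkm : k < m
    · exact ⟨some ⟨k, hkm⟩, hks⟩
    · exact ⟨none, Set.mem_iUnion.mpr ⟨k, Set.mem_iUnion.mpr ⟨le_of_not_gt hkm, hks⟩⟩⟩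
  · rintro (_ | k)
    · exact (isClosed_tail_sub n m).preimage hπ
    · exact ((isClosed_sphereSet n k).preimage continuous_subtype_val).preimage hπ
  · rintro (_ | k)
    · exact ht
    · exact hk k k.2


/-- Gluing finitely many homotopic pairs `fₖ ≃ f'ₖ` (`k = 1, …, m`) with a
pair of homotopic (rel `{θ}`) maps `g ≃ g'` on the tail `⋁̃_{k ≥ m+1} Sₖⁿ` produces
continuous maps `f, f' : (ℍⁿ, θ) → (X, x₀)` that are homotopic rel `{θ}`. -/
theorem hawaiian_glued_homotopic_of_finitely_many
    (n : ℕ) (hn : 1 ≤ n) (m : ℕ) (X : Type*) [TopologicalSpace X] (x₀ : X)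
    (fk f'k : ∀ k : ℕ, ↥(sphereSet n k) → X)
    (hcont : ∀ k, k < m → Continuous (fk k)) (hcont' : ∀ k, k < m → Continuous (f'k k))
    (hpt : ∀ k, k < m → fk k ⟨theta n, theta_mem_sphereSet n k⟩ = x₀)
    (hpt' : ∀ k, k < m → f'k k ⟨theta n, theta_mem_sphereSet n k⟩ = x₀)
    -- each `fₖ` is homotopic to `f'ₖ` rel `{θ}` :
    (hhtpk : ∀ k, k < m → ∃ K : ↥(sphereSet n k) × I → X, Continuous K ∧
      (∀ s, K (s, 0) = fk k s) ∧ (∀ s, K (s, 1) = f'k k s) ∧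
      (∀ t : I, K (⟨theta n, theta_mem_sphereSet n k⟩, t) = x₀))
    (g g' : ↥(tailSet n m) → X)
    (hgcont : Continuous g) (hg'cont : Continuous g')
    (hgpt : g ⟨theta n, theta_mem_tailSet n m⟩ = x₀)
    (hg'pt : g' ⟨theta n, theta_mem_tailSet n m⟩ = x₀)
    -- `g` and `g'` are homotopic rel `{θ}` :
    (hhtpg : ∃ G : ↥(tailSet n m) × I → X, Continuous G ∧
      (∀ s, G (s, 0) = g s) ∧ (∀ s, G (s, 1) = g' s) ∧
      (∀ t : I, G (⟨theta n, theta_mem_tailSet n m⟩, t) = x₀))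
    (f f' : ↥(hawaiianSet n) → X)
    (hres : ∀ (k : ℕ), k < m → ∀ (r : EuclideanSpace ℝ (Fin (n+1))) (hr : r ∈ sphereSet n k),
      f ⟨r, sphereSet_subset n k hr⟩ = fk k ⟨r, hr⟩)
    (hres' : ∀ (k : ℕ), k < m → ∀ (r : EuclideanSpace ℝ (Fin (n+1))) (hr : r ∈ sphereSet n k),
      f' ⟨r, sphereSet_subset n k hr⟩ = f'k k ⟨r, hr⟩)
    (hrestail : ∀ (r : EuclideanSpace ℝ (Fin (n+1))) (hr : r ∈ tailSet n m),
      f ⟨r, tailSet_subset n m hr⟩ = g ⟨r, hr⟩)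
    (hrestail' : ∀ (r : EuclideanSpace ℝ (Fin (n+1))) (hr : r ∈ tailSet n m),
      f' ⟨r, tailSet_subset n m hr⟩ = g' ⟨r, hr⟩) :
    Continuous f ∧ Continuous f' ∧
      ∃ H : ↥(hawaiianSet n) × I → X, Continuous H ∧
        (∀ s, H (s, 0) = f s) ∧ (∀ s, H (s, 1) = f' s) ∧
        (∀ t : I, H (thetaPt n, t) = x₀) := by
  classical
  obtain ⟨G, hGc, hG0, hG1, hGθ⟩ := hhtpg
  choose K hKc hK0 hK1 hKθ using hhtpk
  -- index of a sphere containing a point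
  have hidx : ∀ x : ↥(hawaiianSet n),
      (x : EuclideanSpace ℝ (Fin (n+1))) ∈ sphereSet n (Set.mem_iUnion.mp x.2).choose :=
    fun x => (Set.mem_iUnion.mp x.2).choose_spec
  have hidx_lt : ∀ x : ↥(hawaiianSet n),
      (x : EuclideanSpace ℝ (Fin (n+1))) ∉ tailSet n m →
      (Set.mem_iUnion.mp x.2).choose < m := by
    intro x hx
    by_contra hge
    exact hx (Set.mem_iUnion.mpr ⟨_, Set.mem_iUnion.mpr ⟨le_of_not_gt hge, hidx x⟩⟩)
  -- continuity of f and f'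
  have cont_of : ∀ (F : ↥(hawaiianSet n) → X) (Fk : ∀ k : ℕ, ↥(sphereSet n k) → X)
      (Ft : ↥(tailSet n m) → X),
      (∀ k, k < m → Continuous (Fk k)) → Continuous Ft →
      (∀ (k : ℕ), k < m → ∀ (r) (hr : r ∈ sphereSet n k),
        F ⟨r, sphereSet_subset n k hr⟩ = Fk k ⟨r, hr⟩) →
      (∀ (r) (hr : r ∈ tailSet n m), F ⟨r, tailSet_subset n m hr⟩ = Ft ⟨r, hr⟩) →
      Continuous F := by
    intro F Fk Ft hFkc hFtc hFr hFt
    apply glueAux (m := m) id continuous_id F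
    · intro k hk
      rw [continuousOn_iff_continuous_restrict]
      have : Set.restrict _ F = (Fk k) ∘
          (fun q : ↥(id ⁻¹' (Subtype.val ⁻¹' sphereSet n k) : Set ↥(hawaiianSet n)) =>
            (⟨q.1.1, q.2⟩ : ↥(sphereSet n k))) := by
        funext q
        have hq1 : q.1 = ⟨q.1.1, sphereSet_subset n k q.2⟩ := Subtype.ext rfl
        show F q.1 = _
        rw [hq1]
        exact hFr k hk q.1.1 q.2
      refine (congrArg Continuous this).mpr ?_
      exact (hFkc k hk).comp
        (Continuous.subtype_mk (continuous_subtype_val.comp continuous_subtype_val) _)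
    · rw [continuousOn_iff_continuous_restrict]
      have : Set.restrict _ F = Ft ∘
          (fun q : ↥(id ⁻¹' {x : ↥(hawaiianSet n) |
              (x : EuclideanSpace ℝ (Fin (n+1))) ∈ tailSet n m}) =>
            (⟨q.1.1, q.2⟩ : ↥(tailSet n m))) := by
        funext q
        have hq1 : q.1 = ⟨q.1.1, tailSet_subset n m q.2⟩ := Subtype.ext rfl
        show F q.1 = _
        rw [hq1]
        exact hFt q.1.1 q.2
      refine (congrArg Continuous this).mpr ?_
      exact hFtc.comp
        (Continuous.subtype_mk (continuous_subtype_val.comp continuous_subtype_val) _)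
  have hfc : Continuous f := cont_of f fk g hcont hgcont hres hrestail
  have hf'c : Continuous f' := cont_of f' f'k g' hcont' hg'cont hres' hrestail'
  refine ⟨hfc, hf'c, ?_⟩
  -- total family of homotopies
  set KK : ∀ k : ℕ, ↥(sphereSet n k) × I → X := fun k =>
    if h : k < m then K k h else fun _ => x₀ with hKK
  set H : ↥(hawaiianSet n) × I → X := fun p =>
    if h : (p.1 : EuclideanSpace ℝ (Fin (n+1))) ∈ tailSet n m then G (⟨p.1.1, h⟩, p.2)
    else KK (Set.mem_iUnion.mp p.1.2).choose (⟨p.1.1, hidx p.1⟩, p.2) with hH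
  have Htail : ∀ (p : ↥(hawaiianSet n) × I)
      (h : (p.1 : EuclideanSpace ℝ (Fin (n+1))) ∈ tailSet n m),
      H p = G (⟨p.1.1, h⟩, p.2) := by
    intro p h
    simp only [hH]
    rw [dif_pos h]
  have Hsph : ∀ (k : ℕ) (hk : k < m) (p : ↥(hawaiianSet n) × I)
      (hp : (p.1 : EuclideanSpace ℝ (Fin (n+1))) ∈ sphereSet n k),
      H p = K k hk (⟨p.1.1, hp⟩, p.2) := by
    intro k hk p hp
    by_cases h : (p.1 : EuclideanSpace ℝ (Fin (n+1))) ∈ tailSet n m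
    · obtain ⟨j, hj, hjr⟩ : ∃ j, m ≤ j ∧ (p.1 : EuclideanSpace ℝ (Fin (n+1))) ∈ sphereSet n j := by
        simpa [tailSet, Set.mem_iUnion] using h
      have hθ : (p.1 : EuclideanSpace ℝ (Fin (n+1))) = theta n :=
        sphere_inter (show k ≠ j by omega) hp hjr
      rw [Htail p h]
      have e1 : (⟨p.1.1, h⟩ : ↥(tailSet n m)) = ⟨theta n, theta_mem_tailSet n m⟩ :=
        Subtype.ext hθ
      have e2 : (⟨p.1.1, hp⟩ : ↥(sphereSet n k)) = ⟨theta n, theta_mem_sphereSet n k⟩ :=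
        Subtype.ext hθ
      rw [e1, e2, hGθ, hKθ]
    · have hj := hidx p.1
      have hjk : (Set.mem_iUnion.mp p.1.2).choose = k := by
        by_contra hne
        exact h ((sphere_inter hne hj hp) ▸ theta_mem_tailSet n m)
      simp only [hH]
      rw [dif_neg h]
      have : ∀ (j : ℕ) (hjr : (p.1 : EuclideanSpace ℝ (Fin (n+1))) ∈ sphereSet n j)
          (hje : j = k), KK j (⟨p.1.1, hjr⟩, p.2) = K k hk (⟨p.1.1, hp⟩, p.2) := by
        intro j hjr hje
        subst hje
        rw [hKK]
        simp only [dif_pos hk]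
      exact this _ (hidx p.1) hjk
  refine ⟨H, ?_, ?_, ?_, ?_⟩
  · -- continuity of H
    apply glueAux (m := m) Prod.fst continuous_fst H
    · intro k hk
      rw [continuousOn_iff_continuous_restrict]
      have : Set.restrict _ H = (K k hk) ∘
          (fun q : ↥(Prod.fst ⁻¹' (Subtype.val ⁻¹' sphereSet n k) :
              Set (↥(hawaiianSet n) × I)) =>
            ((⟨q.1.1.1, q.2⟩ : ↥(sphereSet n k)), q.1.2)) := by
        funext q
        exact Hsph k hk q.1 q.2
      refine (congrArg Continuous this).mpr ?_
      exact (hKc k hk).comp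
        ((Continuous.subtype_mk
          (continuous_subtype_val.comp (continuous_fst.comp continuous_subtype_val)) _).prodMk
          (continuous_snd.comp continuous_subtype_val))
    · rw [continuousOn_iff_continuous_restrict]
      have : Set.restrict _ H = G ∘
          (fun q : ↥(Prod.fst ⁻¹' {x : ↥(hawaiianSet n) |
              (x : EuclideanSpace ℝ (Fin (n+1))) ∈ tailSet n m} :
              Set (↥(hawaiianSet n) × I)) =>
            ((⟨q.1.1.1, q.2⟩ : ↥(tailSet n m)), q.1.2)) := by
        funext q
        exact Htail q.1 q.2
      refine (congrArg Continuous this).mpr ?_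
      exact hGc.comp
        ((Continuous.subtype_mk
          (continuous_subtype_val.comp (continuous_fst.comp continuous_subtype_val)) _).prodMk
          (continuous_snd.comp continuous_subtype_val))
  · -- H(·,0) = f
    intro s
    by_cases h : (s : EuclideanSpace ℝ (Fin (n+1))) ∈ tailSet n m
    · rw [Htail (s, 0) h, hG0]
      exact (hrestail s.1 h).symm
    · have hk := hidx_lt s h
      rw [Hsph _ hk (s, 0) (hidx s), hK0]
      exact (hres _ hk s.1 (hidx s)).symm
  · -- H(·,1) = f'
    intro s
    by_cases h : (s : EuclideanSpace ℝ (Fin (n+1))) ∈ tailSet n m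
    · rw [Htail (s, 1) h, hG1]
      exact (hrestail' s.1 h).symm
    · have hk := hidx_lt s h
      rw [Hsph _ hk (s, 1) (hidx s), hK1]
      exact (hres' _ hk s.1 (hidx s)).symm
  · -- basepoint
    intro t
    have hθt : ((thetaPt n : ↥(hawaiianSet n)) : EuclideanSpace ℝ (Fin (n+1))) ∈ tailSet n m :=
      theta_mem_tailSet n m
    rw [Htail (thetaPt n, t) hθt]
    exact hGθ t

end HG
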